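/- For any two probability measures P and Q on the same measurable space, TV(P, Q) ≤ √(min{ (1/2)·D_KL(P‖Q), 1 − exp(−D_KL(P‖Q)) }). -/

import Mathlib

open MeasureTheory Real Classical ENNReal

/-- The Kullback–Leibler divergence `D_KL(P‖Q)`, taken to be `+∞` if absolute continuity
(or integrability of the log-likelihood ratio) fails. -/
noncomputable def klDiv {Θ : Type*} [MeasurableSpace Θ] (P Q : Measure Θ) : ℝ≥0∞ :=
  if P ≪ Q ∧ Integrable (fun θ => Real.log (P.rnDeriv Q θ).toReal) P then
    ENNReal.ofReal (∫ θ, Real.log (P.rnDeriv Q θ).toReal ∂P)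
  else ⊤

/-- The total variation distance `TV(P, Q) = sup_E |P(E) − Q(E)|`. -/
noncomputable def tvDist {Θ : Type*} [MeasurableSpace Θ] (P Q : Measure Θ) : ℝ :=
  sSup {r : ℝ | ∃ E : Set Θ, MeasurableSet E ∧ r = |(P E).toReal - (Q E).toReal|}

section Aux
open Set


private lemma gDeriv {x : ℝ} (hx : 0 < x) :
    HasDerivAt (fun x => (x + 1) * Real.log x - 2 * (x - 1))
      (Real.log x + (x + 1) / x - 2) x := by
  have h1 : HasDerivAt (fun x : ℝ => x + 1) 1 x := (hasDerivAt_id x).add_const 1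
  have h2 : HasDerivAt Real.log x⁻¹ x := Real.hasDerivAt_log hx.ne'
  have h3 := h1.mul h2
  have h4 : HasDerivAt (fun x : ℝ => 2 * (x - 1)) 2 x := by
    simpa using ((hasDerivAt_id x).sub_const 1).const_mul 2
  have := h3.sub h4
  convert this using 1
  · rfl
  · rfl
  · rfl
  · field_simp

private lemma gMono : MonotoneOn (fun x => (x + 1) * Real.log x - 2 * (x - 1)) (Ioi (0:ℝ)) := by
  refine monotoneOn_of_deriv_nonneg (convex_Ioi 0) ?_ ?_ ?_
  · exact fun x hx => ((gDeriv hx).continuousAt).continuousWithinAt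
  · rw [interior_Ioi]
    exact fun x hx => (gDeriv hx).differentiableAt.differentiableWithinAt
  · rw [interior_Ioi]
    intro x hx
    rw [(gDeriv hx).deriv]
    have h := Real.one_sub_inv_le_log_of_pos hx
    have hx' : (x + 1) / x = 1 + x⁻¹ := by
      rw [add_div, div_self hx.ne', one_div]
    rw [hx']
    linarith

private lemma hDeriv {x : ℝ} (hx : 0 < x) :
    HasDerivAt (fun x => (2 * x + 4) * (x * Real.log x - x + 1) - 3 * (x - 1) ^ 2)
      (4 * ((x + 1) * Real.log x - 2 * (x - 1))) x := by
  have h1 : HasDerivAt (fun x : ℝ => 2 * x + 4) 2 x := by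
    simpa using (hasDerivAt_id x).const_mul 2 |>.add_const 4
  have h2 : HasDerivAt (fun x : ℝ => x * Real.log x - x + 1) (Real.log x + 1 - 1) x :=
    ((Real.hasDerivAt_mul_log hx.ne').sub (hasDerivAt_id x)).add_const 1
  have h3 := h1.mul h2
  have h4 : HasDerivAt (fun x : ℝ => 3 * (x - 1) ^ 2) (3 * (2 * (x - 1))) x := by
    simpa using (((hasDerivAt_id x).sub_const 1).pow 2).const_mul 3
  have := h3.sub h4
  convert this using 1
  · rfl
  · rfl
  · rfl
  · ring

private lemma pinsker_pointwise {x : ℝ} (hx : 0 ≤ x) :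
    3 * (x - 1) ^ 2 ≤ (2 * x + 4) * (x * Real.log x - x + 1) := by
  rcases eq_or_lt_of_le hx with rfl | hx
  · simp [Real.log_zero]; norm_num
  set h : ℝ → ℝ := fun x => (2 * x + 4) * (x * Real.log x - x + 1) - 3 * (x - 1) ^ 2 with hh
  have h1 : h 1 = 0 := by simp [hh]
  have hcont : ∀ s : Set ℝ, s ⊆ Ioi 0 → ContinuousOn h s := by
    intro s hs
    apply ContinuousOn.sub
    · exact ContinuousOn.mul (by fun_prop) <| ContinuousOn.add
        ((Real.continuous_mul_log.continuousOn).sub continuousOn_id) continuousOn_const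
    · fun_prop
  have key : 0 ≤ h x := by
    rcases le_total x 1 with hx1 | hx1
    · have anti : AntitoneOn h (Ioc 0 1) := by
        refine antitoneOn_of_deriv_nonpos (convex_Ioc 0 1) (hcont _ Ioc_subset_Ioi_self) ?_ ?_
        · rw [interior_Ioc]
          exact fun y hy => (hDeriv hy.1).differentiableAt.differentiableWithinAt
        · rw [interior_Ioc]
          intro y hy
          rw [(hDeriv hy.1).deriv]
          have := gMono (mem_Ioi.mpr hy.1) (mem_Ioi.mpr one_pos) hy.2.le
          norm_num [Real.log_one] at this
          linarith
      have := anti ⟨hx, hx1⟩ ⟨one_pos, le_refl 1⟩ hx1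
      simpa [h1] using this
    · have mono : MonotoneOn h (Ici (1:ℝ)) := by
        refine monotoneOn_of_deriv_nonneg (convex_Ici 1)
          (hcont _ (fun y hy => mem_Ioi.mpr (lt_of_lt_of_le one_pos hy))) ?_ ?_
        · rw [interior_Ici]
          exact fun y hy => (hDeriv (lt_trans one_pos hy)).differentiableAt.differentiableWithinAt
        · rw [interior_Ici]
          intro y hy
          rw [(hDeriv (lt_trans one_pos hy)).deriv]
          have := gMono (mem_Ioi.mpr one_pos) (mem_Ioi.mpr (lt_trans one_pos hy)) hy.le
          norm_num [Real.log_one] at this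
          linarith
      have := mono (mem_Ici.mpr le_rfl) (mem_Ici.mpr hx1) hx1
      simpa [h1] using this
  simpa [hh] using key


private lemma cs_integral {α : Type*} [MeasurableSpace α] (μ : Measure α)
    (a b : α → ℝ) (ha : ∀ x, 0 ≤ a x) (hb : ∀ x, 0 ≤ b x)
    (hma : AEStronglyMeasurable a μ) (hmb : AEStronglyMeasurable b μ)
    (ha2 : Integrable (fun x => a x ^ 2) μ) (hb2 : Integrable (fun x => b x ^ 2) μ) :
    ∫ x, a x * b x ∂μ ≤ Real.sqrt (∫ x, a x ^ 2 ∂μ) * Real.sqrt (∫ x, b x ^ 2 ∂μ) := by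
  have hpq : (2:ℝ).HolderConjugate 2 := by
    constructor <;> norm_num
  have hMa : MemLp a (ENNReal.ofReal 2) μ := by
    rw [show ENNReal.ofReal 2 = 2 by norm_num]
    exact (memLp_two_iff_integrable_sq hma).mpr ha2
  have hMb : MemLp b (ENNReal.ofReal 2) μ := by
    rw [show ENNReal.ofReal 2 = 2 by norm_num]
    exact (memLp_two_iff_integrable_sq hmb).mpr hb2
  have := integral_mul_le_Lp_mul_Lq_of_nonneg hpq (Filter.Eventually.of_forall ha)
    (Filter.Eventually.of_forall hb) hMa hMb
  calc ∫ x, a x * b x ∂μ ≤ (∫ x, a x ^ (2:ℝ) ∂μ) ^ (1/(2:ℝ)) * (∫ x, b x ^ (2:ℝ) ∂μ) ^ (1/(2:ℝ)) := this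
    _ = Real.sqrt (∫ x, a x ^ 2 ∂μ) * Real.sqrt (∫ x, b x ^ 2 ∂μ) := by
        rw [Real.sqrt_eq_rpow, Real.sqrt_eq_rpow]
        norm_num [Real.rpow_natCast]

private lemma main_bounds {Θ : Type*} [MeasurableSpace Θ] (P Q : Measure Θ)
    [IsProbabilityMeasure P] [IsProbabilityMeasure Q]
    (hac : P ≪ Q) (hint : Integrable (fun θ => Real.log (P.rnDeriv Q θ).toReal) P) :
    0 ≤ ∫ θ, Real.log (P.rnDeriv Q θ).toReal ∂P ∧
    (∫ x, |(P.rnDeriv Q x).toReal - 1| ∂Q) ^ 2 ≤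
      2 * ∫ θ, Real.log (P.rnDeriv Q θ).toReal ∂P ∧
    ((∫ x, |(P.rnDeriv Q x).toReal - 1| ∂Q) / 2) ^ 2 ≤
      1 - Real.exp (-∫ θ, Real.log (P.rnDeriv Q θ).toReal ∂P) := by
  set f : Θ → ℝ := fun x => (P.rnDeriv Q x).toReal with hf_def
  set k : ℝ := ∫ θ, Real.log (f θ) ∂P with hk_def
  set t : ℝ := ∫ x, |f x - 1| ∂Q with ht_def
  have hf_meas : Measurable f := (Measure.measurable_rnDeriv P Q).ennreal_toReal
  have hf_nonneg : ∀ x, 0 ≤ f x := fun x => ENNReal.toReal_nonneg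
  have hf_int : Integrable f Q := Measure.integrable_toReal_rnDeriv
  have hf_one : ∫ x, f x ∂Q = 1 := by
    rw [hf_def, Measure.integral_toReal_rnDeriv hac]; simp
  -- change of measure
  have hk : ∫ x, f x * Real.log (f x) ∂Q = k := by
    have := integral_rnDeriv_smul hac (f := fun θ => Real.log (f θ))
    simpa [smul_eq_mul] using this
  have hflogf_int : Integrable (fun x => f x * Real.log (f x)) Q := by
    have := (integrable_rnDeriv_smul_iff hac).mpr hint
    simpa [smul_eq_mul] using this
  have habs_int : Integrable (fun x => |f x - 1|) Q := (hf_int.sub (integrable_const 1)).abs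
  have ht_nonneg : 0 ≤ t := integral_nonneg (fun x => abs_nonneg _)
  -- φ(f) = f log f - f + 1
  have hφ_sub_int : Integrable (fun x => f x * Real.log (f x) - f x) Q :=
    hflogf_int.sub hf_int
  have hφ_int : Integrable (fun x => f x * Real.log (f x) - f x + 1) Q :=
    hφ_sub_int.add (integrable_const 1)
  have hφ_eq : ∫ x, (f x * Real.log (f x) - f x + 1) ∂Q = k := by
    rw [integral_add hφ_sub_int (integrable_const 1),
      integral_sub hflogf_int hf_int, hk, hf_one]
    simp
  have hφ_nonneg : ∀ x, 0 ≤ f x * Real.log (f x) - f x + 1 := by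
    intro x
    have h := pinsker_pointwise (hf_nonneg x)
    nlinarith [sq_nonneg (f x - 1), hf_nonneg x]
  have hk_nonneg : 0 ≤ k := hφ_eq ▸ integral_nonneg hφ_nonneg
  refine ⟨hk_nonneg, ?_, ?_⟩
  · -- Pinsker
    set a : Θ → ℝ := fun x => Real.sqrt ((2 * f x + 4) / 3) with ha_def
    set b : Θ → ℝ := fun x => |f x - 1| / a x with hb_def
    have ha_pos : ∀ x, 0 < a x := fun x =>
      Real.sqrt_pos.mpr (by have := hf_nonneg x; linarith)
    have hab : ∀ x, a x * b x = |f x - 1| := fun x =>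
      mul_div_cancel₀ _ (ha_pos x).ne'
    have ha_sq : ∀ x, a x ^ 2 = (2 * f x + 4) / 3 := fun x =>
      Real.sq_sqrt (by have := hf_nonneg x; linarith)
    have h2f4_int : Integrable (fun x => 2 * f x + 4) Q :=
      (hf_int.const_mul 2).add (integrable_const 4)
    have ha2_int : Integrable (fun x => a x ^ 2) Q := by
      simp_rw [ha_sq]
      exact h2f4_int.div_const 3
    have hb_sq_le : ∀ x, b x ^ 2 ≤ f x * Real.log (f x) - f x + 1 := by
      intro x
      have h := pinsker_pointwise (hf_nonneg x)
      have h2 : b x ^ 2 = (f x - 1) ^ 2 / ((2 * f x + 4) / 3) := by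
        rw [hb_def]
        simp only [div_pow, ha_sq, sq_abs]
      rw [h2, div_le_iff₀ (by have := hf_nonneg x; positivity)]
      nlinarith
    have hb_meas_m : Measurable b :=
      ((hf_meas.sub measurable_const).abs).div
        ((measurable_const.mul hf_meas |>.add measurable_const |>.div measurable_const).sqrt)
    have hb_meas : AEStronglyMeasurable b Q := hb_meas_m.aestronglyMeasurable
    have hb2_int : Integrable (fun x => b x ^ 2) Q := by
      refine Integrable.mono' hφ_int (hb_meas_m.pow_const 2).aestronglyMeasurable ?_
      exact Filter.Eventually.of_forall fun x => by
        rw [Real.norm_eq_abs, abs_of_nonneg (sq_nonneg _)]; exact hb_sq_le x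
    have hb2_le : ∫ x, b x ^ 2 ∂Q ≤ k := by
      rw [← hφ_eq]
      exact integral_mono hb2_int hφ_int hb_sq_le
    have ha2_eq : ∫ x, a x ^ 2 ∂Q = 2 := by
      simp_rw [ha_sq]
      rw [integral_div, integral_add (hf_int.const_mul 2) (integrable_const 4),
        integral_const_mul, hf_one]
      simp
      norm_num
    have hcs := cs_integral Q a b (fun x => (ha_pos x).le)
      (fun x => div_nonneg (abs_nonneg _) (ha_pos x).le)
      (Measurable.aestronglyMeasurable (by
        exact (measurable_const.mul hf_meas |>.add measurable_const |>.div measurable_const).sqrt))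
      hb_meas ha2_int hb2_int
    have ht_le : t ≤ Real.sqrt 2 * Real.sqrt k := by
      calc t = ∫ x, a x * b x ∂Q := by rw [ht_def]; exact (integral_congr_ae
              (Filter.Eventually.of_forall fun x => (hab x).symm))
        _ ≤ Real.sqrt (∫ x, a x ^ 2 ∂Q) * Real.sqrt (∫ x, b x ^ 2 ∂Q) := hcs
        _ ≤ Real.sqrt 2 * Real.sqrt k := by
            rw [ha2_eq]
            exact mul_le_mul_of_nonneg_left (Real.sqrt_le_sqrt hb2_le) (Real.sqrt_nonneg 2)
    calc t ^ 2 ≤ (Real.sqrt 2 * Real.sqrt k) ^ 2 := by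
          exact pow_le_pow_left₀ ht_nonneg ht_le 2
      _ = 2 * k := by
          rw [mul_pow, Real.sq_sqrt (by norm_num), Real.sq_sqrt hk_nonneg]
  · -- Bretagnolle–Huber
    set s : ℝ := t / 2 with hs_def
    have hs_nonneg : 0 ≤ s := by positivity
    -- step 1 : exp (-k/2) ≤ ∫ √f dQ
    have hfg : ∀ x, f x * Real.exp (-(1/2) * Real.log (f x)) = Real.sqrt (f x) := by
      intro x
      rcases eq_or_lt_of_le (hf_nonneg x) with h0 | hpos
      · rw [← h0]; simp
      · rw [Real.sqrt_eq_rpow, Real.rpow_def_of_pos hpos]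
        nth_rewrite 1 [← Real.exp_log hpos]
        rw [← Real.exp_add]
        congr 1
        ring
    have hf1_int : Integrable (fun x => f x + 1) Q := hf_int.add (integrable_const 1)
    have hsqrt_int : Integrable (fun x => Real.sqrt (f x)) Q := by
      have hbd : Integrable (fun x => (f x + 1) / 2) Q := hf1_int.div_const 2
      refine Integrable.mono' hbd (Measurable.aestronglyMeasurable hf_meas.sqrt) ?_
      refine Filter.Eventually.of_forall fun x => ?_
      rw [Real.norm_eq_abs, abs_of_nonneg (Real.sqrt_nonneg _)]
      nlinarith [Real.sq_sqrt (hf_nonneg x), Real.sqrt_nonneg (f x),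
        sq_nonneg (Real.sqrt (f x) - 1)]
    have hg_int : Integrable (fun x => Real.exp (-(1/2) * Real.log (f x))) P := by
      refine (integrable_rnDeriv_smul_iff hac).mp ?_
      simp only [smul_eq_mul]
      exact hsqrt_int.congr (Filter.Eventually.of_forall fun x => (hfg x).symm)
    have hIg : ∫ x, Real.exp (-(1/2) * Real.log (f x)) ∂P = ∫ x, Real.sqrt (f x) ∂Q := by
      rw [← integral_rnDeriv_smul hac
        (f := fun x => Real.exp (-(1/2) * Real.log (f x)))]
      simp only [smul_eq_mul]
      exact integral_congr_ae (Filter.Eventually.of_forall fun x => hfg x)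
    have hjensen : Real.exp (-(k/2)) ≤ ∫ x, Real.sqrt (f x) ∂Q := by
      have hJ := convexOn_exp.map_integral_le (μ := P)
        (f := fun θ => -(1/2) * Real.log (f θ)) continuous_exp.continuousOn isClosed_univ
        (Filter.Eventually.of_forall fun x => mem_univ _) (hint.const_mul (-(1/2)))
        (by exact hg_int)
      rw [integral_const_mul] at hJ
      rw [← hIg]
      calc Real.exp (-(k/2)) = Real.exp (-(1/2) * k) := by ring_nf
        _ ≤ ∫ x, Real.exp (-(1/2) * Real.log (f x)) ∂P := hJ
    -- step 2 : (∫ √f dQ)^2 ≤ (1 - s)(1 + s)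
    have hm_int : Integrable (fun x => (f x + 1 - |f x - 1|) / 2) Q :=
      (hf1_int.sub habs_int).div_const 2
    have hM_int : Integrable (fun x => (f x + 1 + |f x - 1|) / 2) Q :=
      (hf1_int.add habs_int).div_const 2
    have hm_eq : ∀ x, min (f x) 1 = (f x + 1 - |f x - 1|) / 2 := by
      intro x; rcases le_total (f x) 1 with h | h
      · rw [min_eq_left h, abs_of_nonpos (by linarith)]; ring
      · rw [min_eq_right h, abs_of_nonneg (by linarith)]; ring
    have hM_eq : ∀ x, max (f x) 1 = (f x + 1 + |f x - 1|) / 2 := by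
      intro x; rcases le_total (f x) 1 with h | h
      · rw [max_eq_right h, abs_of_nonpos (by linarith)]; ring
      · rw [max_eq_left h, abs_of_nonneg (by linarith)]; ring
    have hmin_sq : ∀ x, Real.sqrt (min (f x) 1) ^ 2 = (f x + 1 - |f x - 1|) / 2 := fun x => by
      rw [Real.sq_sqrt (le_min (hf_nonneg x) zero_le_one), hm_eq x]
    have hmax_sq : ∀ x, Real.sqrt (max (f x) 1) ^ 2 = (f x + 1 + |f x - 1|) / 2 := fun x => by
      rw [Real.sq_sqrt (le_max_of_le_right zero_le_one), hM_eq x]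
    have hIm : ∫ x, (f x + 1 - |f x - 1|) / 2 ∂Q = 1 - s := by
      rw [integral_div, integral_sub hf1_int habs_int,
        integral_add hf_int (integrable_const 1), hf_one, ← ht_def]
      simp
      ring
    have hIM : ∫ x, (f x + 1 + |f x - 1|) / 2 ∂Q = 1 + s := by
      rw [integral_div, integral_add hf1_int habs_int,
        integral_add hf_int (integrable_const 1), hf_one, ← ht_def]
      simp
      ring
    have h1s : (0:ℝ) ≤ 1 - s := by
      rw [← hIm]
      refine integral_nonneg fun x => ?_
      rw [← hm_eq x]
      exact le_min (hf_nonneg x) zero_le_one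
    have hImin : ∫ x, Real.sqrt (min (f x) 1) ^ 2 ∂Q = 1 - s := by
      simp_rw [hmin_sq]; exact hIm
    have hImax : ∫ x, Real.sqrt (max (f x) 1) ^ 2 ∂Q = 1 + s := by
      simp_rw [hmax_sq]; exact hIM
    have hcs2 : ∫ x, Real.sqrt (f x) ∂Q ≤ Real.sqrt (1 - s) * Real.sqrt (1 + s) := by
      have hcs := cs_integral Q (fun x => Real.sqrt (min (f x) 1))
        (fun x => Real.sqrt (max (f x) 1))
        (fun x => Real.sqrt_nonneg _) (fun x => Real.sqrt_nonneg _)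
        (Measurable.aestronglyMeasurable ((hf_meas.min measurable_const).sqrt))
        (Measurable.aestronglyMeasurable ((hf_meas.max measurable_const).sqrt))
        (by simp_rw [hmin_sq]; exact hm_int)
        (by simp_rw [hmax_sq]; exact hM_int)
      rw [hImin, hImax] at hcs
      refine le_trans (le_of_eq ?_) hcs
      refine integral_congr_ae (Filter.Eventually.of_forall fun x => ?_)
      show Real.sqrt (f x) = Real.sqrt (min (f x) 1) * Real.sqrt (max (f x) 1)
      rw [← Real.sqrt_mul (le_min (hf_nonneg x) zero_le_one), min_mul_max, mul_one]
    -- combine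
    have hfinal : Real.exp (-k) ≤ 1 - s ^ 2 := by
      have h1 : Real.exp (-(k/2)) ≤ Real.sqrt (1 - s) * Real.sqrt (1 + s) :=
        hjensen.trans hcs2
      have h2 : Real.exp (-(k/2)) ^ 2 ≤ (Real.sqrt (1 - s) * Real.sqrt (1 + s)) ^ 2 :=
        pow_le_pow_left₀ (Real.exp_pos _).le h1 2
      calc Real.exp (-k) = Real.exp (-(k/2)) ^ 2 := by
            rw [sq, ← Real.exp_add]; congr 1; ring
        _ ≤ (Real.sqrt (1 - s) * Real.sqrt (1 + s)) ^ 2 := h2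
        _ = (1 - s) * (1 + s) := by
            rw [mul_pow, Real.sq_sqrt h1s, Real.sq_sqrt (by linarith)]
        _ = 1 - s ^ 2 := by ring
    linarith

private lemma event_bound {Θ : Type*} [MeasurableSpace Θ] (P Q : Measure Θ)
    [IsProbabilityMeasure P] [IsProbabilityMeasure Q]
    (hac : P ≪ Q) {E : Set Θ} (hE : MeasurableSet E) :
    |(P E).toReal - (Q E).toReal| ≤ (∫ x, |(P.rnDeriv Q x).toReal - 1| ∂Q) / 2 := by
  set f : Θ → ℝ := fun x => (P.rnDeriv Q x).toReal with hf_def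
  have hf_int : Integrable f Q := Measure.integrable_toReal_rnDeriv
  have hf_one : ∫ x, f x ∂Q = 1 := by
    rw [hf_def, Measure.integral_toReal_rnDeriv hac]; simp
  have hsub_int : Integrable (fun x => f x - 1) Q := hf_int.sub (integrable_const 1)
  have habs_int : Integrable (fun x => |f x - 1|) Q := hsub_int.abs
  have hset : (P E).toReal - (Q E).toReal = ∫ x in E, (f x - 1) ∂Q := by
    rw [integral_sub hf_int.integrableOn (integrable_const 1).integrableOn]
    rw [Measure.setIntegral_toReal_rnDeriv hac E]
    simp [smul_eq_mul]
    rfl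
  have hcompl : ∫ x in E, (f x - 1) ∂Q + ∫ x in Eᶜ, (f x - 1) ∂Q = 0 := by
    rw [integral_add_compl hE hsub_int, integral_sub hf_int (integrable_const 1), hf_one]
    simp
  have h1 : |∫ x in E, (f x - 1) ∂Q| ≤ ∫ x in E, |f x - 1| ∂Q := by
    simpa [Real.norm_eq_abs] using
      norm_integral_le_integral_norm (μ := Q.restrict E) (fun x => f x - 1)
  have h2 : |∫ x in Eᶜ, (f x - 1) ∂Q| ≤ ∫ x in Eᶜ, |f x - 1| ∂Q := by
    simpa [Real.norm_eq_abs] using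
      norm_integral_le_integral_norm (μ := Q.restrict Eᶜ) (fun x => f x - 1)
  have hsplit : ∫ x in E, |f x - 1| ∂Q + ∫ x in Eᶜ, |f x - 1| ∂Q
      = ∫ x, |f x - 1| ∂Q := integral_add_compl hE habs_int
  have heq : |∫ x in Eᶜ, (f x - 1) ∂Q| = |∫ x in E, (f x - 1) ∂Q| := by
    rw [show ∫ x in Eᶜ, (f x - 1) ∂Q = -∫ x in E, (f x - 1) ∂Q by linarith, abs_neg]
  rw [hset]
  have := abs_nonneg (∫ x in E, (f x - 1) ∂Q)
  linarith [heq ▸ h2]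

end Aux

/-- Pinsker's inequality combined with the Bretagnolle–Huber inequality:
`TV(P, Q) ≤ √(min{(1/2)·D_KL(P‖Q), 1 − exp(−D_KL(P‖Q))})`
(when `D_KL(P‖Q) = +∞`, the right-hand side equals `1`). -/
theorem tv_le_sqrt_min_pinsker_bretagnolleHuber
    {Θ : Type*} [MeasurableSpace Θ] (P Q : Measure Θ)
    [IsProbabilityMeasure P] [IsProbabilityMeasure Q] :
    tvDist P Q ≤
      if klDiv P Q = ⊤ then 1
      else Real.sqrt (min ((klDiv P Q).toReal / 2)
        (1 - Real.exp (-(klDiv P Q).toReal))) := by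
  by_cases htop : klDiv P Q = ⊤
  · rw [if_pos htop]
    refine Real.sSup_le ?_ zero_le_one
    rintro r ⟨E, hE, rfl⟩
    have h1 : (P E).toReal ≤ 1 := by
      simpa using ENNReal.toReal_mono ENNReal.one_ne_top (prob_le_one (μ := P) (s := E))
    have h2 : (Q E).toReal ≤ 1 := by
      simpa using ENNReal.toReal_mono ENNReal.one_ne_top (prob_le_one (μ := Q) (s := E))
    have h3 : (0:ℝ) ≤ (P E).toReal := ENNReal.toReal_nonneg
    have h4 : (0:ℝ) ≤ (Q E).toReal := ENNReal.toReal_nonneg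
    rw [abs_sub_le_iff]
    constructor <;> linarith
  · rw [if_neg htop]
    have hcond : P ≪ Q ∧ Integrable (fun θ => Real.log (P.rnDeriv Q θ).toReal) P := by
      by_contra h
      exact htop (by rw [klDiv, if_neg h])
    obtain ⟨hac, hint⟩ := hcond
    obtain ⟨hk0, hpin, hbh⟩ := main_bounds P Q hac hint
    have htor : (klDiv P Q).toReal = ∫ θ, Real.log (P.rnDeriv Q θ).toReal ∂P := by
      rw [klDiv, if_pos ⟨hac, hint⟩, ENNReal.toReal_ofReal hk0]
    rw [htor]
    refine Real.sSup_le ?_ (Real.sqrt_nonneg _)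
    rintro r ⟨E, hE, rfl⟩
    refine Real.le_sqrt_of_sq_le ?_
    have hev := event_bound P Q hac hE
    set t : ℝ := ∫ x, |(P.rnDeriv Q x).toReal - 1| ∂Q
    set k : ℝ := ∫ θ, Real.log (P.rnDeriv Q θ).toReal ∂P
    have hsq : |(P E).toReal - (Q E).toReal| ^ 2 ≤ (t / 2) ^ 2 :=
      pow_le_pow_left₀ (abs_nonneg _) hev 2
    refine le_min ?_ ?_
    · nlinarith
    · nlinarith
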